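/- Let H be a real Hilbert space, Λ ⊆ H a nonempty closed convex set, and f : H → ℝ a differentiable function whose gradient is L-Lipschitz and which is μ-strongly concave on H, with 0 < μ ≤ L. Let λ* ∈ H be the global maximizer of f, and assume λ* ∈ Λ. Then for every λ ∈ Λ, one step of projected gradient ascent with stepsize γ = 1/L satisfies ‖proj_Λ(λ + (1/L)·∇f(λ)) − λ*‖² ≤ (1 − μ/L)·‖λ − λ*‖². -/

import Mathlib

open Set Filter intervalIntegral
open scoped RealInnerProductSpace Topology

section Aux

variable {H : Type*} [NormedAddCommGroup H] [InnerProductSpace ℝ H] [CompleteSpace H]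

/-- derivative of f along a line -/
lemma pgac_hasDerivAt_line (f : H → ℝ) (hdiff : Differentiable ℝ f) (y v : H) (t : ℝ) :
    HasDerivAt (fun s : ℝ => f (y + s • v)) (⟪gradient f (y + t • v), v⟫) t := by
  have h1 : HasDerivAt (fun s : ℝ => y + s • v) v t := by
    simpa using ((hasDerivAt_id t).smul_const v).const_add y
  have h2 := ((hdiff (y + t • v)).hasGradientAt).hasFDerivAt
  have h3 := h2.comp_hasDerivAt t h1
  simpa [Function.comp_def] using h3

/-- first-order strong concavity -/
lemma pgac_first_order (f : H → ℝ) (hdiff : Differentiable ℝ f) (μ : ℝ)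
    (hconc : ∀ x y : H, ∀ a : ℝ, 0 ≤ a → a ≤ 1 →
      a * f x + (1 - a) * f y + μ / 2 * a * (1 - a) * ‖x - y‖ ^ 2
        ≤ f (a • x + (1 - a) • y))
    (x y : H) :
    f x - f y + μ / 2 * ‖x - y‖ ^ 2 ≤ ⟪gradient f y, x - y⟫ := by
  set φ : ℝ → ℝ := fun s => f (y + s • (x - y)) with hφ
  have hder : HasDerivAt φ (⟪gradient f y, x - y⟫) 0 := by
    have := pgac_hasDerivAt_line f hdiff y (x - y) 0
    simpa using this
  have hslope : Tendsto (slope φ 0) (𝓝[>] 0) (𝓝 (⟪gradient f y, x - y⟫)) :=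
    (hasDerivAt_iff_tendsto_slope.mp hder).mono_left
      (nhdsWithin_mono 0 (fun a (ha : a ∈ Ioi (0:ℝ)) => ne_of_gt ha))
  have hineq : ∀ᶠ a in 𝓝[>] (0:ℝ),
      f x - f y + μ / 2 * (1 - a) * ‖x - y‖ ^ 2 ≤ slope φ 0 a := by
    filter_upwards [Ioo_mem_nhdsGT (zero_lt_one)] with a ha
    have key := hconc x y a (le_of_lt ha.1) (le_of_lt ha.2)
    have hxy : a • x + (1 - a) • y = y + a • (x - y) := by module
    rw [hxy] at key
    have hφa : φ a = f (y + a • (x - y)) := rfl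
    have hφ0 : φ 0 = f y := by simp [hφ]
    have hs : slope φ 0 a = (φ a - φ 0) / a := by
      rw [slope_def_field]; ring_nf
    rw [hs, hφa, hφ0, le_div_iff₀ ha.1]
    nlinarith [key]
  have hlim : Tendsto (fun a : ℝ => f x - f y + μ / 2 * (1 - a) * ‖x - y‖ ^ 2)
      (𝓝[>] (0:ℝ)) (𝓝 (f x - f y + μ / 2 * ‖x - y‖ ^ 2)) := by
    have : ContinuousAt (fun a : ℝ => f x - f y + μ / 2 * (1 - a) * ‖x - y‖ ^ 2) 0 := by
      fun_prop
    have := this.continuousWithinAt (s := Ioi (0:ℝ))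
    simpa using this.tendsto
  exact le_of_tendsto_of_tendsto hlim hslope hineq

/-- descent lemma -/
lemma pgac_descent (f : H → ℝ) (hdiff : Differentiable ℝ f) (L : ℝ) (hL : 0 < L)
    (hlip : ∀ x y : H, ‖gradient f x - gradient f y‖ ≤ L * ‖x - y‖)
    (y v : H) :
    f y + ⟪gradient f y, v⟫ - L / 2 * ‖v‖ ^ 2 ≤ f (y + v) := by
  have hgradcont : Continuous (gradient f) := by
    refine (LipschitzWith.of_dist_le_mul (K := Real.toNNReal L) ?_).continuous
    intro a b
    rw [dist_eq_norm, dist_eq_norm, Real.coe_toNNReal _ hL.le]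
    exact hlip a b
  set g : ℝ → ℝ := fun t => ⟪gradient f (y + t • v), v⟫ with hg
  have hgcont : Continuous g := by
    apply Continuous.inner
    · exact hgradcont.comp (by continuity)
    · exact continuous_const
  have hFTC : ∫ t in (0:ℝ)..1, g t = f (y + (1:ℝ) • v) - f (y + (0:ℝ) • v) := by
    exact intervalIntegral.integral_eq_sub_of_hasDerivAt
      (fun t _ => pgac_hasDerivAt_line f hdiff y v t) (hgcont.intervalIntegrable 0 1)
  have hmono : ∫ t in (0:ℝ)..1, (⟪gradient f y, v⟫ - L * ‖v‖ ^ 2 * t)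
      ≤ ∫ t in (0:ℝ)..1, g t := by
    apply intervalIntegral.integral_mono_on zero_le_one
    · exact Continuous.intervalIntegrable
        (by fun_prop : Continuous fun t : ℝ => ⟪gradient f y, v⟫ - L * ‖v‖ ^ 2 * t) 0 1
    · exact hgcont.intervalIntegrable 0 1
    · intro t ht
      have h1 : g t - ⟪gradient f y, v⟫ = ⟪gradient f (y + t • v) - gradient f y, v⟫ := by
        rw [inner_sub_left]
      have h2 : |⟪gradient f (y + t • v) - gradient f y, v⟫| ≤ (L * (t * ‖v‖)) * ‖v‖ := by
        refine le_trans (abs_real_inner_le_norm _ _) ?_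
        apply mul_le_mul_of_nonneg_right _ (norm_nonneg v)
        have := hlip (y + t • v) y
        simpa [norm_smul, abs_of_nonneg ht.1] using this
      have := neg_abs_le (⟪gradient f (y + t • v) - gradient f y, v⟫)
      nlinarith [h2, abs_nonneg (⟪gradient f (y + t • v) - gradient f y, v⟫)]
  have hval : ∫ t in (0:ℝ)..1, (⟪gradient f y, v⟫ - L * ‖v‖ ^ 2 * t)
      = ⟪gradient f y, v⟫ - L / 2 * ‖v‖ ^ 2 := by
    rw [intervalIntegral.integral_sub (intervalIntegrable_const)
      (Continuous.intervalIntegrable (by fun_prop : Continuous fun t : ℝ => L * ‖v‖ ^ 2 * t) 0 1)]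
    rw [intervalIntegral.integral_const_mul, integral_id, intervalIntegral.integral_const]
    norm_num
    ring
  rw [hval] at hmono
  rw [hFTC] at hmono
  simp only [one_smul, zero_smul, add_zero] at hmono
  linarith

end Aux

section Aux2

variable {H : Type*} [NormedAddCommGroup H] [InnerProductSpace ℝ H] [CompleteSpace H]

/-- co-coercivity -/
lemma pgac_cocoercive (f : H → ℝ) (hdiff : Differentiable ℝ f) (L μ : ℝ) (hμ : 0 < μ)
    (hL : 0 < L)
    (hlip : ∀ x y : H, ‖gradient f x - gradient f y‖ ≤ L * ‖x - y‖)
    (hconc : ∀ x y : H, ∀ a : ℝ, 0 ≤ a → a ≤ 1 →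
      a * f x + (1 - a) * f y + μ / 2 * a * (1 - a) * ‖x - y‖ ^ 2
        ≤ f (a • x + (1 - a) • y))
    (x y : H) :
    ⟪gradient f x - gradient f y, x - y⟫
      ≤ -(1 / L) * ‖gradient f x - gradient f y‖ ^ 2 := by
  have key : ∀ a b : H, 1 / (2 * L) * ‖gradient f b - gradient f a‖ ^ 2
      ≤ f a - f b + ⟪gradient f a, b - a⟫ := by
    intro a b
    set d : H := gradient f b - gradient f a with hd
    set z : H := b + (1 / L) • d with hz
    have h1 : f b + ⟪gradient f b, (1 / L) • d⟫ - L / 2 * ‖(1 / L) • d‖ ^ 2 ≤ f z :=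
      pgac_descent f hdiff L hL hlip b ((1 / L) • d)
    have h2 : f z - f a + μ / 2 * ‖z - a‖ ^ 2 ≤ ⟪gradient f a, z - a⟫ :=
      pgac_first_order f hdiff μ hconc z a
    have h3 : ⟪gradient f a, z - a⟫ = ⟪gradient f a, b - a⟫ + (1 / L) * ⟪gradient f a, d⟫ := by
      have : z - a = (b - a) + (1 / L) • d := by rw [hz]; abel
      rw [this, inner_add_right, real_inner_smul_right]
    have h4 : ⟪gradient f b, (1 / L) • d⟫ = (1 / L) * ⟪gradient f b, d⟫ :=
      real_inner_smul_right _ _ _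
    have h5 : ‖(1 / L) • d‖ ^ 2 = (1 / L) ^ 2 * ‖d‖ ^ 2 := by
      rw [norm_smul, Real.norm_eq_abs, abs_of_pos (one_div_pos.mpr hL), mul_pow]
    have h6 : ⟪gradient f b, d⟫ - ⟪gradient f a, d⟫ = ‖d‖ ^ 2 := by
      rw [← inner_sub_left, ← hd, real_inner_self_eq_norm_sq]
    have hμz : 0 ≤ μ / 2 * ‖z - a‖ ^ 2 := by positivity
    have hLne : (L:ℝ) ≠ 0 := ne_of_gt hL
    rw [h4, h5] at h1
    have hX : L / 2 * ((1 / L) ^ 2 * ‖d‖ ^ 2) = 1 / (2 * L) * ‖d‖ ^ 2 := by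
      field_simp
    rw [hX] at h1
    have h7 : (1 / L) * ⟪gradient f b, d⟫ - (1 / L) * ⟪gradient f a, d⟫
        = (1 / L) * ‖d‖ ^ 2 := by rw [← mul_sub, h6]
    have h8 : (1 / L) * ‖d‖ ^ 2 - 1 / (2 * L) * ‖d‖ ^ 2 = 1 / (2 * L) * ‖d‖ ^ 2 := by
      field_simp; ring
    linarith [h1, h2, h3, h7, h8, hμz]
  have k1 := key x y
  have k2 := key y x
  have e1 : ‖gradient f x - gradient f y‖ = ‖gradient f y - gradient f x‖ := norm_sub_rev _ _
  have e2 : ⟪gradient f y, x - y⟫ = -⟪gradient f y, y - x⟫ := by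
    rw [← inner_neg_right]; congr 1; abel
  have e3 : ⟪gradient f x - gradient f y, x - y⟫
      = ⟪gradient f x, x - y⟫ - ⟪gradient f y, x - y⟫ := inner_sub_left _ _ _
  have e4 : ⟪gradient f x, x - y⟫ = -⟪gradient f x, y - x⟫ := by
    rw [← inner_neg_right]; congr 1; abel
  have hLne : (L:ℝ) ≠ 0 := ne_of_gt hL
  rw [e3, e4]
  rw [← e1] at k1
  rw [e2] at k2
  have h8 : 1 / (2 * L) * ‖gradient f x - gradient f y‖ ^ 2
      + 1 / (2 * L) * ‖gradient f x - gradient f y‖ ^ 2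
      = (1 / L) * ‖gradient f x - gradient f y‖ ^ 2 := by
    field_simp; ring
  linarith [k1, k2, h8]

/-- strong monotonicity -/
lemma pgac_monotone (f : H → ℝ) (hdiff : Differentiable ℝ f) (μ : ℝ)
    (hconc : ∀ x y : H, ∀ a : ℝ, 0 ≤ a → a ≤ 1 →
      a * f x + (1 - a) * f y + μ / 2 * a * (1 - a) * ‖x - y‖ ^ 2
        ≤ f (a • x + (1 - a) • y))
    (x y : H) :
    ⟪gradient f x - gradient f y, x - y⟫ ≤ -μ * ‖x - y‖ ^ 2 := by
  have k1 := pgac_first_order f hdiff μ hconc x y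
  have k2 := pgac_first_order f hdiff μ hconc y x
  have e2 : ⟪gradient f x, y - x⟫ = -⟪gradient f x, x - y⟫ := by
    rw [← inner_neg_right]; congr 1; abel
  have e3 : ⟪gradient f x - gradient f y, x - y⟫
      = ⟪gradient f x, x - y⟫ - ⟪gradient f y, x - y⟫ := inner_sub_left _ _ _
  have e4 : ‖y - x‖ = ‖x - y‖ := norm_sub_rev _ _
  rw [e4] at k2
  rw [e2] at k2
  linarith [e3, k1, k2]

end Aux2


/-- **One-step contraction of projected gradient ascent.**
Let `Λ` be a nonempty closed convex subset of a real Hilbert space `H` with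
nearest-point projection `proj`, and let `f : H → ℝ` be differentiable with
`L`-Lipschitz gradient and `μ`-strongly concave on `H`, `0 < μ ≤ L`.  If
`λ* ∈ Λ` is the global maximizer of `f`, then for every `λ ∈ Λ`, one projected
gradient-ascent step with stepsize `1/L` satisfies
`‖proj(λ + (1/L)∇f(λ)) − λ*‖² ≤ (1 − μ/L)·‖λ − λ*‖²`. -/
theorem projected_gradient_ascent_contraction
    {H : Type*} [NormedAddCommGroup H] [InnerProductSpace ℝ H] [CompleteSpace H]
    (Λ : Set H) (hΛne : Λ.Nonempty) (hΛcl : IsClosed Λ) (hΛconv : Convex ℝ Λ)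
    (proj : H → H)
    (hproj : ∀ x : H, proj x ∈ Λ ∧ ∀ y ∈ Λ, ‖x - proj x‖ ≤ ‖x - y‖)
    (f : H → ℝ) (hdiff : Differentiable ℝ f)
    (L μ : ℝ) (hμ : 0 < μ) (hμL : μ ≤ L)
    (hlip : ∀ x y : H, ‖gradient f x - gradient f y‖ ≤ L * ‖x - y‖)
    (hconc : ∀ x y : H, ∀ a : ℝ, 0 ≤ a → a ≤ 1 →
      a * f x + (1 - a) * f y + μ / 2 * a * (1 - a) * ‖x - y‖ ^ 2
        ≤ f (a • x + (1 - a) • y))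
    (lamstar : H) (hmem : lamstar ∈ Λ) (hmax : ∀ x : H, f x ≤ f lamstar) :
    ∀ l ∈ Λ,
      ‖proj (l + (1 / L) • gradient f l) - lamstar‖ ^ 2
        ≤ (1 - μ / L) * ‖l - lamstar‖ ^ 2 := by
  have hL : (0:ℝ) < L := lt_of_lt_of_le hμ hμL
  have hLne : (L:ℝ) ≠ 0 := ne_of_gt hL
  -- gradient vanishes at the maximizer
  have hgradstar : gradient f lamstar = 0 := by
    have hloc : ∀ v : H, ⟪gradient f lamstar, v⟫ = 0 := by
      intro v
      have hder := pgac_hasDerivAt_line f hdiff lamstar v 0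
      have hmax' : IsLocalMax (fun s : ℝ => f (lamstar + s • v)) 0 := by
        apply Filter.Eventually.of_forall
        intro t
        simpa using hmax (lamstar + t • v)
      have := hmax'.hasDerivAt_eq_zero hder
      simpa using this
    have := hloc (gradient f lamstar)
    rwa [real_inner_self_eq_norm_sq, pow_eq_zero_iff (by norm_num), norm_eq_zero] at this
  intro l hl
  set g : H := gradient f l with hgdef
  set u : H := l + (1 / L) • g with hu
  set p : H := proj u with hp
  -- projection characterization
  have hproj_ineq : ∀ w ∈ Λ, ⟪u - p, w - p⟫ ≤ 0 := by
    have hmemp : p ∈ Λ := (hproj u).1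
    haveI : Nonempty Λ := ⟨⟨p, hmemp⟩⟩
    rw [← norm_eq_iInf_iff_real_inner_le_zero hΛconv hmemp]
    apply le_antisymm
    · apply le_ciInf
      intro w
      exact (hproj u).2 w w.2
    · exact ciInf_le ⟨0, fun _ ⟨_, h⟩ => h ▸ norm_nonneg _⟩ (⟨p, hmemp⟩ : Λ)
  -- nonexpansive step
  have hstep1 : ‖p - lamstar‖ ^ 2 ≤ ‖u - lamstar‖ ^ 2 := by
    have h1 : ⟪u - p, lamstar - p⟫ ≤ 0 := hproj_ineq lamstar hmem
    have h2 : ‖p - lamstar‖ ^ 2 = ⟪p - u, p - lamstar⟫ + ⟪u - lamstar, p - lamstar⟫ := by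
      rw [← inner_add_left]
      have : p - u + (u - lamstar) = p - lamstar := by abel
      rw [this, real_inner_self_eq_norm_sq]
    have h3 : ⟪p - u, p - lamstar⟫ = ⟪u - p, lamstar - p⟫ := by
      rw [← inner_neg_neg]; congr 1 <;> abel
    have h4 : ⟪u - lamstar, p - lamstar⟫ ≤ ‖u - lamstar‖ * ‖p - lamstar‖ :=
      real_inner_le_norm _ _
    nlinarith [norm_nonneg (p - lamstar), norm_nonneg (u - lamstar),
      sq_nonneg (‖u - lamstar‖ - ‖p - lamstar‖)]
  -- expand and contract
  have hexp : ‖u - lamstar‖ ^ 2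
      = ‖l - lamstar‖ ^ 2 + 2 * (1 / L) * ⟪l - lamstar, g⟫ + (1 / L) ^ 2 * ‖g‖ ^ 2 := by
    have : u - lamstar = (l - lamstar) + (1 / L) • g := by rw [hu]; abel
    rw [this, norm_add_sq_real, real_inner_smul_right, norm_smul, Real.norm_eq_abs,
      abs_of_pos (one_div_pos.mpr hL), mul_pow]
    ring
  have hmono := pgac_monotone f hdiff μ hconc l lamstar
  have hcoco := pgac_cocoercive f hdiff L μ hμ hL hlip hconc l lamstar
  rw [hgradstar, sub_zero] at hmono hcoco
  rw [← hgdef] at hmono hcoco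
  have hsym : ⟪l - lamstar, g⟫ = ⟪g, l - lamstar⟫ := real_inner_comm _ _
  have hc : (0:ℝ) < 1 / L := one_div_pos.mpr hL
  have hm1 : (1 / L) * ⟪g, l - lamstar⟫ ≤ (1 / L) * (-μ * ‖l - lamstar‖ ^ 2) :=
    mul_le_mul_of_nonneg_left hmono hc.le
  have hm2 : (1 / L) * ⟪g, l - lamstar⟫ ≤ (1 / L) * (-(1 / L) * ‖g‖ ^ 2) :=
    mul_le_mul_of_nonneg_left hcoco hc.le
  have hfield : (1 / L) * μ = μ / L := by ring
  calc ‖p - lamstar‖ ^ 2 ≤ ‖u - lamstar‖ ^ 2 := hstep1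
    _ = ‖l - lamstar‖ ^ 2 + 2 * (1 / L) * ⟪l - lamstar, g⟫ + (1 / L) ^ 2 * ‖g‖ ^ 2 := hexp
    _ ≤ (1 - μ / L) * ‖l - lamstar‖ ^ 2 := by
        rw [hsym]
        nlinarith [hm1, hm2]
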